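/- arXiv:math/0606004 — 7 statements merged into one kernel-verified Lean document; each statement's English description precedes it below -/
import Mathlib

section
/- Let 𝒫 be a weak parallelogram structure on a nonempty set X. For every finitely supported function f: X → ℂ, the sum ∑_{(x00,x01,x10,x11)∈𝒫} f(x00)·conj(f(x01))·conj(f(x10))·f(x11) is a nonnegative real number. Consequently ‖f‖_𝒫 := (this sum)^{1/4} is well defined, the map f ↦ ‖f‖_𝒫 is a seminorm on the space of finitely supported complex-valued functions on X, and it is a norm if and only if the structure 𝒫 is strong. -/
open scoped Pointwise

namespace HK

/-- Quadruples of elements of `X`, indexed by the vertices `00, 01, 10, 11` of the square. -/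
abbrev Quad (X : Type) := X × X × X × X

/-- Vertices of the cube `{0,1}³`. -/
abbrev Vtx := Fin 3 → Bool

/-- Elements of `X^{[3]} = X⁸`, indexed by the vertices of the cube. -/
abbrev Cube (X : Type) := Vtx → X

variable {X Y : Type}

/-- Apply a map coordinatewise to a quadruple. -/
def map4 (f : X → Y) (p : Quad X) : Quad Y := (f p.1, f p.2.1, f p.2.2.1, f p.2.2.2)

/-- Apply a map coordinatewise to a cube. -/
def mapCube (f : X → Y) (x : Cube X) : Cube Y := fun v => f (x v)

/-- A weak parallelogram structure: the relation `(x00,x01) ∼ (x10,x11) ↔ (x00,x01,x10,x11) ∈ P`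
is an equivalence relation, `P` is invariant under exchanging the two middle entries, and
any three points can be completed to a parallelogram. -/
def IsWeakParallelogram (P : Set (Quad X)) : Prop :=
  (∀ a b : X, (a, b, a, b) ∈ P) ∧
  (∀ a b c d : X, (a, b, c, d) ∈ P → (c, d, a, b) ∈ P) ∧
  (∀ a b c d e f : X, (a, b, c, d) ∈ P → (c, d, e, f) ∈ P → (a, b, e, f) ∈ P) ∧
  (∀ a b c d : X, (a, b, c, d) ∈ P → (a, c, b, d) ∈ P) ∧
  (∀ a b c : X, ∃ d, (a, b, c, d) ∈ P)

/-- A strong parallelogram structure: the completing fourth point is unique. -/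
def IsStrongParallelogram (P : Set (Quad X)) : Prop :=
  IsWeakParallelogram P ∧ ∀ a b c : X, ∃! d, (a, b, c, d) ∈ P

/-- The entry of a quadruple at a vertex of the square. -/
def quadAt (p : Quad X) : Bool → Bool → X
  | false, false => p.1
  | false, true => p.2.1
  | true, false => p.2.2.1
  | true, true => p.2.2.2

/-- The cube whose face `ε₁ = 0` is `p` and whose face `ε₁ = 1` is `q`. -/
def joinQuad (p q : Quad X) : Cube X :=
  fun v => if v 0 = false then quadAt p (v 1) (v 2) else quadAt q (v 1) (v 2)

/-- The vertex of the cube with value `b` at coordinate `i` and values `u,v` at the two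
remaining coordinates, taken in increasing order. -/
def insert3 (i : Fin 3) (b u v : Bool) : Vtx :=
  if i = 0 then ![b, u, v] else if i = 1 then ![u, b, v] else ![u, v, b]

/-- The face `{v : v i = b}` of a cube, as a quadruple in lexicographic order. -/
def face (x : Cube X) (i : Fin 3) (b : Bool) : Quad X :=
  (x (insert3 i b false false), x (insert3 i b false true),
   x (insert3 i b true false), x (insert3 i b true true))

/-- The permutations of the vertices of the cube induced by Euclidean isometries of the unit
cube: a permutation of the three coordinates composed with flips of some coordinates. -/
def cubeSym (σ : Equiv.Perm (Fin 3)) (c : Vtx) (v : Vtx) : Vtx :=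
  fun j => xor (v (σ j)) (c j)

/-- A weak parallelepiped structure `(P, Q)`: every face of an element of `Q` lies in `P`;
`Q` is invariant under the Euclidean permutations of the cube; the relation `≈` on `P`
(`p ≈ q ↔ joinQuad p q ∈ Q`) is an equivalence relation; and seven points whose three
determined faces lie in `P` can be completed to an element of `Q`. -/
def IsWeakParallelepiped (P : Set (Quad X)) (Q : Set (Cube X)) : Prop :=
  IsWeakParallelogram P ∧
  (∀ x ∈ Q, ∀ (i : Fin 3) (b : Bool), face x i b ∈ P) ∧
  (∀ (σ : Equiv.Perm (Fin 3)) (c : Vtx), ∀ x ∈ Q, (fun v => x (cubeSym σ c v)) ∈ Q) ∧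
  (∀ p ∈ P, joinQuad p p ∈ Q) ∧
  (∀ p q : Quad X, joinQuad p q ∈ Q → joinQuad q p ∈ Q) ∧
  (∀ p q r : Quad X, joinQuad p q ∈ Q → joinQuad q r ∈ Q → joinQuad p r ∈ Q) ∧
  (∀ x000 x001 x010 x011 x100 x101 x110 : X,
    (x000, x001, x010, x011) ∈ P → (x000, x010, x100, x110) ∈ P →
    (x000, x001, x100, x101) ∈ P →
    ∃ x111, joinQuad (x000, x001, x010, x011) (x100, x101, x110, x111) ∈ Q)

/-- A strong parallelepiped structure: the completing eighth point is unique. -/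
def IsStrongParallelepiped (P : Set (Quad X)) (Q : Set (Cube X)) : Prop :=
  IsWeakParallelepiped P Q ∧
  ∀ x000 x001 x010 x011 x100 x101 x110 : X,
    (x000, x001, x010, x011) ∈ P → (x000, x010, x100, x110) ∈ P →
    (x000, x001, x100, x101) ∈ P →
    ∃! x111, joinQuad (x000, x001, x010, x011) (x100, x101, x110, x111) ∈ Q

/-- The setoid on `X²` given by the parallelogram relation `∼`. -/
def baseSetoid (P : Set (Quad X)) (hP : IsWeakParallelogram P) : Setoid (X × X) where
  r p q := (p.1, p.2, q.1, q.2) ∈ P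
  iseqv := ⟨fun p => hP.1 p.1 p.2,
            fun h => hP.2.1 _ _ _ _ h,
            fun h h' => hP.2.2.1 _ _ _ _ _ _ h h'⟩

/-- The base `B = X²/∼` of a weak parallelogram structure. -/
def Base (P : Set (Quad X)) (hP : IsWeakParallelogram P) : Type := Quotient (baseSetoid P hP)

/-- The class `⟨x,y⟩ ∈ B` of a pair `(x,y)`. -/
def cls (P : Set (Quad X)) (hP : IsWeakParallelogram P) (x y : X) : Base P hP :=
  Quotient.mk (baseSetoid P hP) (x, y)

/-- The Gowers-type sum over parallelograms attached to a finitely supported `f : X → ℂ`. -/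
noncomputable def gSum2 (P : Set (Quad X)) (f : X →₀ ℂ) : ℂ :=
  ∑ᶠ q ∈ P, f q.1 * (starRingEnd ℂ) (f q.2.1) * (starRingEnd ℂ) (f q.2.2.1) * f q.2.2.2

/-- The seminorm `‖f‖_P = (gSum2 P f)^{1/4}`. -/
noncomputable def pNorm (P : Set (Quad X)) (f : X →₀ ℂ) : ℝ :=
  (gSum2 P f).re ^ ((1 : ℝ) / 4)

/-- `C^{|ε|} z`: conjugate `z` when the vertex `v` has an odd number of `1` entries. -/
noncomputable def cConjFactor (v : Vtx) (z : ℂ) : ℂ :=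
  if xor (v 0) (xor (v 1) (v 2)) then (starRingEnd ℂ) z else z

/-- The Gowers-type sum over parallelepipeds attached to a finitely supported `f : X → ℂ`. -/
noncomputable def gSum3 (Q : Set (Cube X)) (f : X →₀ ℂ) : ℂ :=
  ∑ᶠ x ∈ Q, ∏ v : Vtx, cConjFactor v (f (x v))

/-- The seminorm `‖f‖_Q = (gSum3 Q f)^{1/8}`. -/
noncomputable def qNorm (Q : Set (Cube X)) (f : X →₀ ℂ) : ℝ :=
  (gSum3 Q f).re ^ ((1 : ℝ) / 8)

/-- The structure group of a parallelepiped structure, as a set of bijections of `X`: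
those `g` mapping every parallelogram to an equivalent parallelogram. -/
def structSet (P : Set (Quad X)) (Q : Set (Cube X)) : Set (Equiv.Perm X) :=
  {g | ∀ p ∈ P, map4 g p ∈ P ∧ joinQuad (map4 g p) p ∈ Q}

/-- `x` and `y` lie in the same fiber of `π : X → B`, `π(x) = ⟨i,x⟩`. -/
def sameFiber (P : Set (Quad X)) (i x y : X) : Prop := (i, x, i, y) ∈ P

/-- A vertical quadruple: all four points lie in one fiber. -/
def VerticalQ (P : Set (Quad X)) (i : X) (w : Quad X) : Prop :=
  sameFiber P i w.1 w.2.1 ∧ sameFiber P i w.2.1 w.2.2.1 ∧ sameFiber P i w.2.2.1 w.2.2.2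

/-- `y = u·x` where `u = [w]` is the class of the vertical parallelogram `w`:
`(x,x,x,y)` is a parallelogram equivalent to `w`. -/
def actsRel (P : Set (Quad X)) (Q : Set (Cube X)) (w : Quad X) (x y : X) : Prop :=
  (x, x, x, y) ∈ P ∧ joinQuad (x, x, x, y) w ∈ Q

section Groups

variable (G : Type) [Group G]

/-- The diagonal embedding `G → G^{[2]}`. -/
def diagHom2 : G →* Quad G where
  toFun g := (g, g, g, g)
  map_one' := rfl
  map_mul' _ _ := rfl

/-- The diagonal embedding `G → G^{[3]}`. -/
def diagHom3 : G →* Cube G where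
  toFun g := fun _ => g
  map_one' := rfl
  map_mul' _ _ := rfl

/-- The two dimensional edge group `G^{[2,1]}`. -/
def edgeGroup2 : Subgroup (Quad G) :=
  Subgroup.closure
    {q : Quad G | ∃ g : G, q = (g, g, 1, 1) ∨ q = (g, 1, g, 1) ∨ q = (g, g, g, g)}

/-- The second commutator subgroup `G₃ = [G, G₂]`. -/
def secondCommutator : Subgroup G := ⁅(⊤ : Subgroup G), commutator G⁆

variable {G}

/-- The edge group `F^{[2,1]}` of a subgroup `F ≤ G`, inside `G^{[2]}`. -/
def edgeGroup2Of (F : Subgroup G) : Subgroup (Quad G) :=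
  Subgroup.closure
    {q : Quad G | ∃ u ∈ F, q = (u, u, 1, 1) ∨ q = (u, 1, u, 1) ∨ q = (u, u, u, u)}

/-- `F^{[2]} = F⁴` as a subgroup of `G^{[2]}`. -/
def quadSub (F : Subgroup G) : Subgroup (Quad G) := F.prod (F.prod (F.prod F))

/-- Faces of the cube `{0,1}³`. -/
def IsFace3 (α : Set Vtx) : Prop := ∃ (i : Fin 3) (b : Bool), α = {v : Vtx | v i = b}

/-- Edges of the cube `{0,1}³`. -/
def IsEdge3 (α : Set Vtx) : Prop :=
  ∃ (i j : Fin 3) (b c : Bool), i ≠ j ∧ α = {v : Vtx | v i = b ∧ v j = c}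

open Classical in
/-- The element `g^{[3,α]}` of `G^{[3]}`, with coordinate `g` on `α` and `1` elsewhere. -/
noncomputable def cubeElt (α : Set Vtx) (g : G) : Cube G :=
  fun v => if v ∈ α then g else 1

variable (G)

/-- The face group `G^{[3,2]}`, generated by the `g^{[3,f]}` for faces `f` of the cube. -/
noncomputable def faceGroup : Subgroup (Cube G) :=
  Subgroup.closure {x : Cube G | ∃ (g : G) (α : Set Vtx), IsFace3 α ∧ x = cubeElt α g}

variable {G}

/-- The edge group `F^{[3,1]}` of a subgroup `F ≤ G`, generated by the `u^{[3,e]}` for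
`u ∈ F` and edges `e` of the cube. -/
noncomputable def edgeGroup3 (F : Subgroup G) : Subgroup (Cube G) :=
  Subgroup.closure {x : Cube G | ∃ u ∈ F, ∃ α : Set Vtx, IsEdge3 α ∧ x = cubeElt α u}

end Groups

/-- The data realizing `(PY, QY)` as the nilparallelepiped structure associated to
`G`, `F`, `Γ` via the coset projection `p : G → Y ≅ G/Γ`. -/
def NilWitness (G : Type) [Group G] (F Γ : Subgroup G) {Y : Type} (p : G → Y)
    (PY : Set (Quad Y)) (QY : Set (Cube Y)) : Prop :=
  commutator G ≤ F ∧ F ≤ Subgroup.center G ∧ Γ ⊓ F = ⊥ ∧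
  Function.Surjective p ∧ (∀ g g' : G, p g = p g' ↔ g⁻¹ * g' ∈ Γ) ∧
  PY = map4 p '' ((edgeGroup2 G : Set (Quad G)) * (quadSub F : Set (Quad G))) ∧
  QY = mapCube p '' ((faceGroup G : Set (Cube G)) * (edgeGroup3 F : Set (Cube G)))

/-- `(PY, QY)` is a nilparallelepiped structure. -/
def IsNilStructure {Y : Type} (PY : Set (Quad Y)) (QY : Set (Cube Y)) : Prop :=
  ∃ (G : Type) (inst : Group G) (F Γ : @Subgroup G inst) (p : G → Y),
    @NilWitness G inst F Γ Y p PY QY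

/-- A splitting of the exact sequence `0 → F → P_s → B → 0` for `s = ⟨a₀, b₀⟩`, encoded
by a lift `ψ : X → 𝒫_s` of a homomorphism section `φ : B → P_s` of `q_s`:
`ψ x` is a parallelogram in `𝒫_s` representing the class `φ(π(x))`. -/
def IsSplittingAt (P : Set (Quad X)) (Q : Set (Cube X)) (i a₀ b₀ : X) : Prop :=
  ∃ ψ : X → Quad X,
    (∀ x, ψ x ∈ P) ∧
    (∀ x, (a₀, b₀, (ψ x).1, (ψ x).2.1) ∈ P) ∧
    (∀ x, ((ψ x).1, (ψ x).2.2.1, i, x) ∈ P) ∧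
    (∀ x y, (i, x, i, y) ∈ P → joinQuad (ψ x) (ψ y) ∈ Q) ∧
    (∀ x1 x2 x3, (x1, x3, i, x2) ∈ P →
      ∃ c d, joinQuad ((ψ x1).2.2.1, (ψ x1).2.2.2, c, d) (ψ x2) ∈ Q ∧
        joinQuad ((ψ x1).1, (ψ x1).2.1, c, d) (ψ x3) ∈ Q)

/-- `(B, c)` is a realization of the base group of the parallelogram structure `P`,
`c x y` realizing the class `⟨x,y⟩`. -/
def IsBaseRealization (P : Set (Quad X)) (B : Type) [AddCommGroup B] (c : X → X → B) : Prop :=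
  (Function.Surjective fun p : X × X => c p.1 p.2) ∧
  (∀ a b a' b' : X, c a b = c a' b' ↔ (a, b, a', b') ∈ P) ∧
  (∀ a b d : X, c a b + c b d = c a d)

/-- `(F, fl)` is a realization of the fiber group of the parallelepiped structure `(P, Q)`:
`fl` maps vertical parallelograms onto `F`, separates exactly the `≈`-classes, and is
additive with respect to the composition of vertical parallelograms. -/
def IsFiberRealization (P : Set (Quad X)) (Q : Set (Cube X)) (i : X) (F : Type)
    [AddCommGroup F] (fl : Quad X → F) : Prop :=
  (∀ u : F, ∃ w, VerticalQ P i w ∧ fl w = u) ∧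
  (∀ w w' : Quad X, VerticalQ P i w → VerticalQ P i w' →
    (fl w = fl w' ↔ joinQuad w w' ∈ Q)) ∧
  (∀ x0 x1 x2 x3 x4 x5 : X, sameFiber P i x0 x1 → sameFiber P i x1 x2 →
    sameFiber P i x2 x3 → sameFiber P i x3 x4 → sameFiber P i x4 x5 →
    fl (x0, x1, x2, x3) + fl (x2, x3, x4, x5) = fl (x0, x1, x4, x5))

/-- A divisible (equivalently, injective) abelian group. -/
def IsDivisibleGroup (F : Type) [AddCommGroup F] : Prop :=
  ∀ (u : F) (n : ℕ), 0 < n → ∃ v : F, n • v = u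

/-- A projective abelian group (projective as a `ℤ`-module). -/
def IsProjectiveAdd (B : Type) [AddCommGroup B] : Prop := Module.Projective ℤ B


section GowersAux

open Finset

variable {X' : Type} (P : Set (Quad X')) (hP : IsWeakParallelogram P)

private lemma psymm (hP : IsWeakParallelogram P) {a b c d : X'} (h : (a,b,c,d) ∈ P) :
    (c,d,a,b) ∈ P := hP.2.1 _ _ _ _ h
private lemma ptrans (hP : IsWeakParallelogram P) {a b c d e f : X'}
    (h : (a,b,c,d) ∈ P) (h' : (c,d,e,f) ∈ P) : (a,b,e,f) ∈ P := hP.2.2.1 _ _ _ _ _ _ h h'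
private lemma pswap (hP : IsWeakParallelogram P) {a b c d : X'} (h : (a,b,c,d) ∈ P) :
    (a,c,b,d) ∈ P := hP.2.2.2.1 _ _ _ _ h
private lemma pdiag (hP : IsWeakParallelogram P) (u v : X') : (u,u,v,v) ∈ P :=
  pswap P hP (hP.1 u v)

private lemma mk_eq_mk {p q : X' × X'} :
    Quotient.mk (baseSetoid P hP) p = Quotient.mk (baseSetoid P hP) q ↔
      (p.1, p.2, q.1, q.2) ∈ P := by
  constructor
  · exact fun h => Quotient.exact h
  · exact fun h => Quotient.sound h

/-- The multilinear Gowers sum. -/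
private noncomputable def gS (f g u v : X' →₀ ℂ) : ℂ :=
  ∑ᶠ q ∈ P, f q.1 * (starRingEnd ℂ) (g q.2.1) * (starRingEnd ℂ) (u q.2.2.1) * v q.2.2.2

private lemma gSum2_eq_gS (f : X' →₀ ℂ) : gSum2 P f = gS P f f f f := rfl

/-- A decidable equality on the base, chosen once and for all. -/
private noncomputable def bdec : DecidableEq (Base P hP) := fun _ _ => Classical.propDecidable _

/-- The classes hit by `A × A`. -/
private noncomputable def TT (A : Finset X') : Finset (Base P hP) :=
  @Finset.image _ _ (bdec P hP) (Quotient.mk (baseSetoid P hP)) (A ×ˢ A)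

private lemma mem_TT {A : Finset X'} {q : X' × X'} (hq : q ∈ A ×ˢ A) :
    Quotient.mk (baseSetoid P hP) q ∈ TT P hP A := by
  unfold TT
  exact (@Finset.mem_image _ _ (bdec P hP) _ _ _).mpr ⟨q, hq, rfl⟩

open Classical in
/-- The weight of a pair in a given class. -/
private noncomputable def wgt (f g : X' →₀ ℂ) (t : Base P hP) (p : X' × X') : ℂ :=
  if Quotient.mk (baseSetoid P hP) p = t then f p.1 * (starRingEnd ℂ) (g p.2) else 0

open Classical in
/-- The conjugate weight. -/
private noncomputable def cwgt (u v : X' →₀ ℂ) (t : Base P hP) (q : X' × X') : ℂ :=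
  if Quotient.mk (baseSetoid P hP) q = t then (starRingEnd ℂ) (u q.1) * v q.2 else 0

private lemma wgt_pos {f g : X' →₀ ℂ} {t : Base P hP} {p : X' × X'}
    (h : Quotient.mk (baseSetoid P hP) p = t) :
    wgt P hP f g t p = f p.1 * (starRingEnd ℂ) (g p.2) := if_pos h

private lemma wgt_neg {f g : X' →₀ ℂ} {t : Base P hP} {p : X' × X'}
    (h : ¬ Quotient.mk (baseSetoid P hP) p = t) : wgt P hP f g t p = 0 := if_neg h

private lemma wgt_conj (u v : X' →₀ ℂ) (t : Base P hP) (q : X' × X') :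
    (starRingEnd ℂ) (wgt P hP u v t q) = cwgt P hP u v t q := by
  unfold wgt cwgt
  split_ifs
  · rw [map_mul, Complex.conj_conj]
  · exact map_zero _

private lemma wgt_add4 (f g : X' →₀ ℂ) (t : Base P hP) (p : X' × X') :
    wgt P hP (f + g) (f + g) t p =
      wgt P hP f f t p + wgt P hP f g t p + wgt P hP g f t p + wgt P hP g g t p := by
  unfold wgt
  split_ifs
  · rw [Finsupp.add_apply, Finsupp.add_apply, map_add]; ring
  · simp

private lemma wgt_smul (c : ℂ) (f : X' →₀ ℂ) (t : Base P hP) (p : X' × X') :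
    wgt P hP (c • f) (c • f) t p = (c * (starRingEnd ℂ) c) * wgt P hP f f t p := by
  unfold wgt
  split_ifs
  · rw [Finsupp.smul_apply, Finsupp.smul_apply, smul_eq_mul, smul_eq_mul, map_mul]; ring
  · rw [mul_zero]

/-- The vector of partial sums over classes. -/
private noncomputable def scF (A : Finset X') (f g : X' →₀ ℂ) :
    EuclideanSpace ℂ ↥(TT P hP A) :=
  WithLp.toLp 2 (fun t => ∑ p ∈ A ×ˢ A, wgt P hP f g ↑t p)

open Classical in
private lemma gS_eq_nested (hP : IsWeakParallelogram P) (A : Finset X') (f g u v : X' →₀ ℂ)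
    (hf : f.support ⊆ A) (hg : g.support ⊆ A) (hu : u.support ⊆ A) (hv : v.support ⊆ A) :
    gS P f g u v = ∑ a ∈ A, ∑ b ∈ A, ∑ c ∈ A, ∑ d ∈ A,
      if (a, b, c, d) ∈ P
      then f a * (starRingEnd ℂ) (g b) * (starRingEnd ℂ) (u c) * v d else 0 := by
  classical
  set F : Quad X' → ℂ :=
    fun q => f q.1 * (starRingEnd ℂ) (g q.2.1) * (starRingEnd ℂ) (u q.2.2.1) * v q.2.2.2 with hF
  have hsub : P ∩ Function.support F =
      ↑((A ×ˢ A ×ˢ A ×ˢ A).filter (· ∈ P)) ∩ Function.support F := by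
    ext q
    simp only [Set.mem_inter_iff, Function.mem_support, coe_filter, Set.mem_setOf_eq,
      mem_product]
    constructor
    · rintro ⟨hqP, hqF⟩
      refine ⟨⟨⟨?_, ?_, ?_, ?_⟩, hqP⟩, hqF⟩
      · exact hf (Finsupp.mem_support_iff.2 (fun h => hqF (by simp [hF, h])))
      · exact hg (Finsupp.mem_support_iff.2 (fun h => hqF (by simp [hF, h])))
      · exact hu (Finsupp.mem_support_iff.2 (fun h => hqF (by simp [hF, h])))
      · exact hv (Finsupp.mem_support_iff.2 (fun h => hqF (by simp [hF, h])))
    · rintro ⟨⟨-, hqP⟩, hqF⟩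
      exact ⟨hqP, hqF⟩
  rw [gS, finsum_mem_eq_sum_of_inter_support_eq F hsub, sum_filter]
  rw [Finset.sum_product]
  refine Finset.sum_congr rfl fun a _ => ?_
  rw [Finset.sum_product]
  refine Finset.sum_congr rfl fun b _ => ?_
  rw [Finset.sum_product]

open Classical in
private lemma gS_swap (hP : IsWeakParallelogram P) (A : Finset X') (f g u v : X' →₀ ℂ)
    (hf : f.support ⊆ A) (hg : g.support ⊆ A) (hu : u.support ⊆ A) (hv : v.support ⊆ A) :
    gS P f g u v = gS P f u g v := by
  classical
  rw [gS_eq_nested P hP A f g u v hf hg hu hv, gS_eq_nested P hP A f u g v hf hu hg hv]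
  refine Finset.sum_congr rfl fun a _ => ?_
  rw [Finset.sum_comm]
  refine Finset.sum_congr rfl fun c _ => Finset.sum_congr rfl fun b _ =>
    Finset.sum_congr rfl fun d _ => ?_
  have hiff : ((a, b, c, d) ∈ P) ↔ ((a, c, b, d) ∈ P) := ⟨pswap P hP, pswap P hP⟩
  rw [if_congr hiff rfl rfl]
  split_ifs with h
  · ring
  · rfl

open Classical in
/-- Kronecker delta weight. -/
private noncomputable def dwgt (z : ℂ) (t0 t : Base P hP) : ℂ := if t0 = t then z else 0

private lemma sum_dwgt (s : Finset (Base P hP)) (z : ℂ) (t0 : Base P hP) (h : t0 ∈ s) :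
    ∑ t ∈ s, dwgt P hP z t0 t = z := by
  rw [Finset.sum_eq_single_of_mem t0 h
    (fun b _ hb => by unfold dwgt; exact if_neg fun hh => hb hh.symm)]
  unfold dwgt
  exact if_pos rfl

open Classical in
private lemma sum_wgt_mul (A : Finset X') (f g u v : X' →₀ ℂ) (q p : X' × X')
    (hq : q ∈ A ×ˢ A) :
    (∑ t ∈ TT P hP A, cwgt P hP u v t q * wgt P hP f g t p) =
      if (p.1, p.2, q.1, q.2) ∈ P
      then f p.1 * (starRingEnd ℂ) (g p.2) * (starRingEnd ℂ) (u q.1) * v q.2 else 0 := by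
  have hmem : Quotient.mk (baseSetoid P hP) q ∈ TT P hP A := mem_TT P hP hq
  have hterm : ∀ t : Base P hP, cwgt P hP u v t q * wgt P hP f g t p =
      dwgt P hP (if (p.1, p.2, q.1, q.2) ∈ P
        then f p.1 * (starRingEnd ℂ) (g p.2) * (starRingEnd ℂ) (u q.1) * v q.2 else 0)
        (Quotient.mk (baseSetoid P hP) q) t := by
    intro t
    by_cases h1 : Quotient.mk (baseSetoid P hP) q = t
    · rw [show cwgt P hP u v t q = (starRingEnd ℂ) (u q.1) * v q.2 from if_pos h1,
        show dwgt P hP (if (p.1, p.2, q.1, q.2) ∈ P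
          then f p.1 * (starRingEnd ℂ) (g p.2) * (starRingEnd ℂ) (u q.1) * v q.2 else 0)
          (Quotient.mk (baseSetoid P hP) q) t = (if (p.1, p.2, q.1, q.2) ∈ P
          then f p.1 * (starRingEnd ℂ) (g p.2) * (starRingEnd ℂ) (u q.1) * v q.2 else 0)
          from if_pos h1]
      by_cases h3 : (p.1, p.2, q.1, q.2) ∈ P
      · rw [if_pos h3, wgt_pos P hP (((mk_eq_mk P hP).2 h3).trans h1)]
        ring
      · rw [if_neg h3, wgt_neg P hP (fun h2 : Quotient.mk (baseSetoid P hP) p = t =>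
          h3 ((mk_eq_mk P hP).1 (h2.trans h1.symm))), mul_zero]
    · rw [show cwgt P hP u v t q = 0 from if_neg h1, zero_mul,
        show dwgt P hP (if (p.1, p.2, q.1, q.2) ∈ P
          then f p.1 * (starRingEnd ℂ) (g p.2) * (starRingEnd ℂ) (u q.1) * v q.2 else 0)
          (Quotient.mk (baseSetoid P hP) q) t = 0 from if_neg h1]
  rw [Finset.sum_congr rfl fun t _ => hterm t, sum_dwgt P hP _ _ _ hmem]

private lemma gS_eq_inner (A : Finset X') (f g u v : X' →₀ ℂ)
    (hf : f.support ⊆ A) (hg : g.support ⊆ A) (hu : u.support ⊆ A) (hv : v.support ⊆ A) :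
    gS P f g u v = inner ℂ (scF P hP A u v) (scF P hP A f g) := by
  classical
  have h1 : (inner ℂ (scF P hP A u v) (scF P hP A f g) : ℂ) =
      ∑ t ∈ TT P hP A,
        (∑ q ∈ A ×ˢ A, cwgt P hP u v t q) * (∑ p ∈ A ×ˢ A, wgt P hP f g t p) := by
    calc (inner ℂ (scF P hP A u v) (scF P hP A f g) : ℂ)
        = ∑ t : ↥(TT P hP A),
            (starRingEnd ℂ) (∑ q ∈ A ×ˢ A, wgt P hP u v (↑t) q) *
              (∑ p ∈ A ×ˢ A, wgt P hP f g (↑t) p) := by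
          rw [PiLp.inner_apply]
          simp only [RCLike.inner_apply', scF, PiLp.toLp_apply]
      _ = ∑ t ∈ TT P hP A,
            (starRingEnd ℂ) (∑ q ∈ A ×ˢ A, wgt P hP u v t q) *
              (∑ p ∈ A ×ˢ A, wgt P hP f g t p) :=
          Finset.sum_coe_sort (TT P hP A) (fun b =>
            (starRingEnd ℂ) (∑ q ∈ A ×ˢ A, wgt P hP u v b q) *
              (∑ p ∈ A ×ˢ A, wgt P hP f g b p))
      _ = ∑ t ∈ TT P hP A,
            (∑ q ∈ A ×ˢ A, cwgt P hP u v t q) * (∑ p ∈ A ×ˢ A, wgt P hP f g t p) := by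
          refine Finset.sum_congr rfl fun t _ => ?_
          rw [map_sum]
          exact congrArg (· * _) (Finset.sum_congr rfl fun q _ => wgt_conj P hP u v t q)
  have h3 : (∑ t ∈ TT P hP A,
        (∑ q ∈ A ×ˢ A, cwgt P hP u v t q) * (∑ p ∈ A ×ˢ A, wgt P hP f g t p)) =
      ∑ a ∈ A, ∑ b ∈ A, ∑ c ∈ A, ∑ d ∈ A,
        if (a, b, c, d) ∈ P
        then f a * (starRingEnd ℂ) (g b) * (starRingEnd ℂ) (u c) * v d else 0 := by
    calc (∑ t ∈ TT P hP A,
          (∑ q ∈ A ×ˢ A, cwgt P hP u v t q) * (∑ p ∈ A ×ˢ A, wgt P hP f g t p))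
        = ∑ t ∈ TT P hP A, ∑ q ∈ A ×ˢ A, ∑ p ∈ A ×ˢ A,
            cwgt P hP u v t q * wgt P hP f g t p :=
          Finset.sum_congr rfl fun t _ => Finset.sum_mul_sum _ _ _ _
      _ = ∑ q ∈ A ×ˢ A, ∑ p ∈ A ×ˢ A, ∑ t ∈ TT P hP A,
            cwgt P hP u v t q * wgt P hP f g t p := by
          rw [Finset.sum_comm]
          exact Finset.sum_congr rfl fun q _ => Finset.sum_comm
      _ = ∑ q ∈ A ×ˢ A, ∑ p ∈ A ×ˢ A,
            if (p.1, p.2, q.1, q.2) ∈ P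
            then f p.1 * (starRingEnd ℂ) (g p.2) * (starRingEnd ℂ) (u q.1) * v q.2 else 0 :=
          Finset.sum_congr rfl fun q hq => Finset.sum_congr rfl fun p _ =>
            sum_wgt_mul P hP A f g u v q p hq
      _ = ∑ p ∈ A ×ˢ A, ∑ q ∈ A ×ˢ A,
            if (p.1, p.2, q.1, q.2) ∈ P
            then f p.1 * (starRingEnd ℂ) (g p.2) * (starRingEnd ℂ) (u q.1) * v q.2 else 0 :=
          Finset.sum_comm
      _ = ∑ a ∈ A, ∑ b ∈ A, ∑ c ∈ A, ∑ d ∈ A,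
            if (a, b, c, d) ∈ P
            then f a * (starRingEnd ℂ) (g b) * (starRingEnd ℂ) (u c) * v d else 0 := by
          rw [Finset.sum_product]
          refine Finset.sum_congr rfl fun a _ => Finset.sum_congr rfl fun b _ => ?_
          rw [Finset.sum_product]
  rw [gS_eq_nested P hP A f g u v hf hg hu hv, h1, h3]

private lemma gSum2_eq_normSq (A : Finset X') (f : X' →₀ ℂ) (hf : f.support ⊆ A) :
    gSum2 P f = ((‖scF P hP A f f‖ ^ 2 : ℝ) : ℂ) := by
  rw [gSum2_eq_gS, gS_eq_inner P hP A f f f f hf hf hf hf, inner_self_eq_norm_sq_to_K]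
  norm_cast

private lemma gSum2_re (A : Finset X') (f : X' →₀ ℂ) (hf : f.support ⊆ A) :
    (gSum2 P f).re = ‖scF P hP A f f‖ ^ 2 := by
  rw [gSum2_eq_normSq P hP A f hf, Complex.ofReal_re]

private lemma pNorm_eq_sqrt (A : Finset X') (f : X' →₀ ℂ) (hf : f.support ⊆ A) :
    pNorm P f = Real.sqrt ‖scF P hP A f f‖ := by
  rw [pNorm, gSum2_re P hP A f hf, Real.sqrt_eq_rpow,
    ← Real.rpow_natCast ‖scF P hP A f f‖ 2, ← Real.rpow_mul (norm_nonneg _)]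
  norm_num

end GowersAux


open scoped ComplexOrder in
/-- For a weak parallelogram structure `P` on a nonempty set `X`, the Gowers
sum of any finitely supported `f : X → ℂ` is a nonnegative real, `‖·‖_P` is a seminorm on
finitely supported functions, and it is a norm iff `P` is strong. -/
theorem gowers_two_seminorm (X : Type) [Nonempty X] (P : Set (Quad X))
    (hP : IsWeakParallelogram P) :
    (∀ f : X →₀ ℂ, 0 ≤ gSum2 P f) ∧
    (∀ f : X →₀ ℂ, 0 ≤ pNorm P f) ∧
    (∀ (c : ℂ) (f : X →₀ ℂ), pNorm P (c • f) = ‖c‖ * pNorm P f) ∧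
    (∀ f g : X →₀ ℂ, pNorm P (f + g) ≤ pNorm P f + pNorm P g) ∧
    ((∀ f : X →₀ ℂ, pNorm P f = 0 → f = 0) ↔ IsStrongParallelogram P) := by
  classical
  have part1 : ∀ f : X →₀ ℂ, 0 ≤ gSum2 P f := by
    intro f
    rw [gSum2_eq_normSq P hP f.support f subset_rfl]
    exact Complex.zero_le_real.2 (sq_nonneg _)
  have part2 : ∀ f : X →₀ ℂ, 0 ≤ pNorm P f := by
    intro f
    rw [pNorm_eq_sqrt P hP f.support f subset_rfl]
    exact Real.sqrt_nonneg _
  have part3 : ∀ (c : ℂ) (f : X →₀ ℂ), pNorm P (c • f) = ‖c‖ * pNorm P f := by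
    intro c f
    have hsupp : (c • f).support ⊆ f.support := Finsupp.support_smul
    have hsc : scF P hP f.support (c • f) (c • f) =
        (c * (starRingEnd ℂ) c) • scF P hP f.support f f := by
      ext t
      show (∑ p ∈ f.support ×ˢ f.support, wgt P hP (c • f) (c • f) ↑t p) =
        (c * (starRingEnd ℂ) c) * ∑ p ∈ f.support ×ˢ f.support, wgt P hP f f ↑t p
      rw [Finset.mul_sum]
      exact Finset.sum_congr rfl fun p _ => wgt_smul P hP c f ↑t p
    rw [pNorm_eq_sqrt P hP f.support (c • f) hsupp,
      pNorm_eq_sqrt P hP f.support f subset_rfl, hsc, norm_smul]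
    have hnc : ‖c * (starRingEnd ℂ) c‖ = ‖c‖ * ‖c‖ := by
      rw [norm_mul, RCLike.norm_conj]
    rw [hnc, Real.sqrt_mul (mul_nonneg (norm_nonneg c) (norm_nonneg c)),
      Real.sqrt_mul_self (norm_nonneg c)]
  have part4 : ∀ f g : X →₀ ℂ, pNorm P (f + g) ≤ pNorm P f + pNorm P g := by
    intro f g
    set A := f.support ∪ g.support with hA
    have hfA : f.support ⊆ A := Finset.subset_union_left
    have hgA : g.support ⊆ A := Finset.subset_union_right
    have hfgA : (f + g).support ⊆ A := Finsupp.support_add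
    have hadd : scF P hP A (f + g) (f + g) =
        scF P hP A f f + scF P hP A f g + scF P hP A g f + scF P hP A g g := by
      ext t
      show (∑ p ∈ A ×ˢ A, wgt P hP (f + g) (f + g) ↑t p) =
        (∑ p ∈ A ×ˢ A, wgt P hP f f ↑t p) + (∑ p ∈ A ×ˢ A, wgt P hP f g ↑t p) +
        (∑ p ∈ A ×ˢ A, wgt P hP g f ↑t p) + (∑ p ∈ A ×ˢ A, wgt P hP g g ↑t p)
      rw [Finset.sum_congr rfl fun p _ => wgt_add4 P hP f g ↑t p]
      simp only [Finset.sum_add_distrib]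
    have cross : ∀ u v : X →₀ ℂ, u.support ⊆ A → v.support ⊆ A →
        ‖scF P hP A u v‖ ^ 2 ≤ ‖scF P hP A u u‖ * ‖scF P hP A v v‖ := by
      intro u v hu hv
      have e1 : (inner ℂ (scF P hP A u v) (scF P hP A u v) : ℂ) = gS P u v u v :=
        (gS_eq_inner P hP A u v u v hu hv hu hv).symm
      have e2 : gS P u v u v = gS P u u v v := gS_swap P hP A u v u v hu hv hu hv
      have e3 : gS P u u v v = inner ℂ (scF P hP A v v) (scF P hP A u u) :=
        gS_eq_inner P hP A u u v v hu hu hv hv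
      have e4 : ((‖scF P hP A u v‖ ^ 2 : ℝ) : ℂ) =
          inner ℂ (scF P hP A u v) (scF P hP A u v) := by
        rw [inner_self_eq_norm_sq_to_K]; norm_cast
      have e5 : (‖scF P hP A u v‖ ^ 2 : ℝ) =
          Complex.re (inner ℂ (scF P hP A v v) (scF P hP A u u) : ℂ) := by
        rw [← e3, ← e2, ← e1, ← e4, Complex.ofReal_re]
      rw [e5]
      calc Complex.re (inner ℂ (scF P hP A v v) (scF P hP A u u) : ℂ)
          ≤ ‖(inner ℂ (scF P hP A v v) (scF P hP A u u) : ℂ)‖ := by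
            exact Complex.re_le_norm _
        _ ≤ ‖scF P hP A v v‖ * ‖scF P hP A u u‖ := norm_inner_le_norm _ _
        _ = ‖scF P hP A u u‖ * ‖scF P hP A v v‖ := mul_comm _ _
    set a := ‖scF P hP A f f‖ with ha
    set b := ‖scF P hP A g g‖ with hb
    have ha0 : 0 ≤ a := norm_nonneg _
    have hb0 : 0 ≤ b := norm_nonneg _
    have hfg : ‖scF P hP A f g‖ ≤ Real.sqrt a * Real.sqrt b := by
      calc ‖scF P hP A f g‖ = Real.sqrt (‖scF P hP A f g‖ ^ 2) :=
            (Real.sqrt_sq (norm_nonneg _)).symm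
        _ ≤ Real.sqrt (a * b) := Real.sqrt_le_sqrt (cross f g hfA hgA)
        _ = Real.sqrt a * Real.sqrt b := Real.sqrt_mul ha0 b
    have hgf : ‖scF P hP A g f‖ ≤ Real.sqrt a * Real.sqrt b := by
      calc ‖scF P hP A g f‖ = Real.sqrt (‖scF P hP A g f‖ ^ 2) :=
            (Real.sqrt_sq (norm_nonneg _)).symm
        _ ≤ Real.sqrt (b * a) := Real.sqrt_le_sqrt (cross g f hgA hfA)
        _ = Real.sqrt a * Real.sqrt b := by rw [Real.sqrt_mul hb0 a, mul_comm]
    have htri : ‖scF P hP A (f + g) (f + g)‖ ≤ (Real.sqrt a + Real.sqrt b) ^ 2 := by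
      rw [hadd]
      calc ‖scF P hP A f f + scF P hP A f g + scF P hP A g f + scF P hP A g g‖
          ≤ ‖scF P hP A f f + scF P hP A f g + scF P hP A g f‖ + ‖scF P hP A g g‖ :=
            norm_add_le _ _
        _ ≤ (‖scF P hP A f f + scF P hP A f g‖ + ‖scF P hP A g f‖) + ‖scF P hP A g g‖ := by
            gcongr
            exact norm_add_le _ _
        _ ≤ ((‖scF P hP A f f‖ + ‖scF P hP A f g‖) + ‖scF P hP A g f‖) + ‖scF P hP A g g‖ := by
            gcongr
            exact norm_add_le _ _
        _ ≤ ((a + Real.sqrt a * Real.sqrt b) + Real.sqrt a * Real.sqrt b) + b := by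
            gcongr
        _ = (Real.sqrt a + Real.sqrt b) ^ 2 := by
            rw [add_sq, Real.sq_sqrt ha0, Real.sq_sqrt hb0]; ring
    rw [pNorm_eq_sqrt P hP A (f + g) hfgA, pNorm_eq_sqrt P hP A f hfA,
      pNorm_eq_sqrt P hP A g hgA]
    calc Real.sqrt ‖scF P hP A (f + g) (f + g)‖
        ≤ Real.sqrt ((Real.sqrt a + Real.sqrt b) ^ 2) := Real.sqrt_le_sqrt htri
      _ = Real.sqrt a + Real.sqrt b := Real.sqrt_sq (by positivity)
  refine ⟨part1, part2, part3, part4, ?_⟩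
  constructor
  · intro hnorm
    refine ⟨hP, fun a b c => ?_⟩
    obtain ⟨d, hd⟩ := hP.2.2.2.2 a b c
    refine ⟨d, hd, fun d' hd' => ?_⟩
    by_contra hne
    have hned : d ≠ d' := fun h => hne h.symm
    have hcd : (c, d, c, d') ∈ P := ptrans P hP (psymm P hP hd) hd'
    have h1 : (c, c, d, d') ∈ P := pswap P hP hcd
    have h2 : (c, c, d', d) ∈ P := pswap P hP (psymm P hP hcd)
    have e1 : (d, d, d, d') ∈ P := ptrans P hP (pdiag P hP d c) h1
    have e2 : (d, d, d', d) ∈ P := ptrans P hP (pdiag P hP d c) h2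
    have e3 : (d, d, d', d') ∈ P := pdiag P hP d d'
    have e0 : (d, d, d, d) ∈ P := hP.1 d d
    set f : X →₀ ℂ := Finsupp.single d 1 - Finsupp.single d' 1 with hfdef
    have hfd : f d = 1 := by
      simp [hfdef, Finsupp.single_apply, hne]
    have hfd' : f d' = -1 := by
      simp [hfdef, Finsupp.single_apply, hned]
    have hsub : f.support ⊆ {d, d'} := by
      refine Finsupp.support_sub.trans (Finset.union_subset ?_ ?_)
      · exact Finsupp.support_single_subset.trans (by simp)
      · exact Finsupp.support_single_subset.trans (by simp)
    have hmkall : ∀ p ∈ f.support ×ˢ f.support,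
        Quotient.mk (baseSetoid P hP) p = Quotient.mk (baseSetoid P hP) (d, d) := by
      intro p hp
      rw [Finset.mem_product] at hp
      have hx := hsub hp.1
      have hy := hsub hp.2
      rw [Finset.mem_insert, Finset.mem_singleton] at hx hy
      rw [mk_eq_mk P hP]
      obtain h1' | h1' := hx <;> obtain h2' | h2' := hy <;> rw [h1', h2']
      · exact psymm P hP e0
      · exact psymm P hP e1
      · exact psymm P hP e2
      · exact psymm P hP e3
    have hsum0 : (∑ x ∈ f.support, f x) = 0 := by
      rw [Finset.sum_subset hsub (fun x _ hx => Finsupp.notMem_support_iff.1 hx),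
        Finset.sum_pair hned, hfd, hfd']
      ring
    have hΦ0 : scF P hP f.support f f = 0 := by
      ext t
      show (∑ p ∈ f.support ×ˢ f.support, wgt P hP f f ↑t p) = 0
      by_cases ht : (↑t : Base P hP) = Quotient.mk (baseSetoid P hP) (d, d)
      · rw [Finset.sum_congr rfl (fun p hp => wgt_pos P hP ((hmkall p hp).trans ht.symm))]
        have hps : (∑ p ∈ f.support ×ˢ f.support, f p.1 * (starRingEnd ℂ) (f p.2)) =
            (∑ x ∈ f.support, f x) * (∑ y ∈ f.support, (starRingEnd ℂ) (f y)) := by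
          rw [Finset.sum_mul_sum, Finset.sum_product]
        rw [hps, hsum0, zero_mul]
      · refine Finset.sum_eq_zero fun p hp => wgt_neg P hP fun h => ht ?_
        rw [← h, hmkall p hp]
    have hpf : pNorm P f = 0 := by
      rw [pNorm_eq_sqrt P hP f.support f subset_rfl, hΦ0, norm_zero, Real.sqrt_zero]
    have hf0 := hnorm f hpf
    rw [hf0] at hfd
    simp at hfd
  · rintro ⟨-, huniq⟩ f hpf
    by_contra hf0
    obtain ⟨x, hx⟩ := Finsupp.support_nonempty_iff.2 hf0
    set A := f.support with hAdef
    have hdiag : ∀ p ∈ A ×ˢ A,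
        (Quotient.mk (baseSetoid P hP) p = Quotient.mk (baseSetoid P hP) (x, x) ↔
          p.2 = p.1) := by
      rintro ⟨u, v⟩ hp
      rw [mk_eq_mk P hP]
      constructor
      · intro h
        have hxx1 : (x, x, u, v) ∈ P := psymm P hP h
        have hxx2 : (x, x, u, u) ∈ P := pdiag P hP x u
        obtain ⟨e, -, he⟩ := huniq x x u
        rw [he v hxx1, he u hxx2]
      · intro h
        show (u, v, x, x) ∈ P
        rw [show v = u from h]
        exact pdiag P hP u x
    have ht0 : Quotient.mk (baseSetoid P hP) (x, x) ∈ TT P hP A :=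
      mem_TT P hP (Finset.mem_product.2 ⟨hx, hx⟩)
    have hval : scF P hP A f f ⟨Quotient.mk (baseSetoid P hP) (x, x), ht0⟩ =
        ((∑ y ∈ A, Complex.normSq (f y) : ℝ) : ℂ) := by
      show (∑ p ∈ A ×ˢ A, wgt P hP f f (Quotient.mk (baseSetoid P hP) (x, x)) p) = _
      rw [Finset.sum_product]
      push_cast
      refine Finset.sum_congr rfl fun y hy => ?_
      rw [Finset.sum_eq_single_of_mem y hy (fun z hz hzy => wgt_neg P hP
        (fun h => hzy ((hdiag (y, z) (Finset.mem_product.2 ⟨hy, hz⟩)).1 h)))]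
      rw [wgt_pos P hP ((hdiag (y, y) (Finset.mem_product.2 ⟨hy, hy⟩)).2 rfl),
        Complex.mul_conj]
    have hpos : (0 : ℝ) < ∑ y ∈ A, Complex.normSq (f y) :=
      Finset.sum_pos' (fun y _ => Complex.normSq_nonneg _)
        ⟨x, hx, Complex.normSq_pos.2 (Finsupp.mem_support_iff.1 hx)⟩
    have hvec : scF P hP A f f ≠ 0 := by
      intro h0
      rw [h0] at hval
      have hz : ((∑ y ∈ A, Complex.normSq (f y) : ℝ) : ℂ) = 0 := by
        rw [← hval]; rfl
      exact absurd (Complex.ofReal_eq_zero.1 hz) (ne_of_gt hpos)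
    have hlt : 0 < pNorm P f := by
      rw [pNorm_eq_sqrt P hP A f subset_rfl]
      exact Real.sqrt_pos.2 (norm_pos_iff.2 hvec)
    rw [hpf] at hlt
    exact lt_irrefl _ hlt

end HK
end

section
/- Let X be a finite set with n elements and let 𝒫 ⊆ X⁴ satisfy all the conditions in the definition of a strong parallelogram structure except possibly transitivity of the relation ∼; that is: ∼ (defined by (x00,x01) ∼ (x10,x11) iff (x00,x01,x10,x11) ∈ 𝒫) is reflexive and symmetric; if (x00,x01,x10,x11) ∈ 𝒫 then (x00,x10,x01,x11) ∈ 𝒫; and for all x00,x01,x10 ∈ X there exists a unique x11 ∈ X with (x00,x01,x10,x11) ∈ 𝒫. Assume in addition the positivity relation: for every function F: X² → ℂ, ∑_{(x00,x01,x10,x11)∈𝒫} F(x00,x01)·conj(F(x10,x11)) ≥ 0. Then ∼ is transitive, and hence 𝒫 is a strong parallelogram structure on X. -/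
open scoped Pointwise

namespace HK

variable {X Y : Type}

lemma sum_triple' {α : Type*} [DecidableEq α] {x y z : α} (hxy : x ≠ y) (hxz : x ≠ z)
    (hyz : y ≠ z) {M : Type*} [AddCommMonoid M] (f : α → M) :
    ∑ s ∈ ({x, y, z} : Finset α), f s = f x + f y + f z := by
  rw [Finset.sum_insert (by simp [hxy, hxz]), Finset.sum_insert (by simp [hyz]),
    Finset.sum_singleton, add_assoc]

open scoped ComplexOrder in
/-- On a finite set, a set `P ⊆ X⁴` satisfying all the axioms of a strong
parallelogram structure except possibly transitivity, together with the positivity relation,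
is automatically transitive, hence a strong parallelogram structure. -/
theorem transitivity_from_positivity (X : Type) [Fintype X] [Nonempty X]
    (P : Set (Quad X))
    (hrefl : ∀ a b : X, (a, b, a, b) ∈ P)
    (hsymm : ∀ a b c d : X, (a, b, c, d) ∈ P → (c, d, a, b) ∈ P)
    (hswap : ∀ a b c d : X, (a, b, c, d) ∈ P → (a, c, b, d) ∈ P)
    (hclose : ∀ a b c : X, ∃! d, (a, b, c, d) ∈ P)
    (hpos : ∀ F : X × X → ℂ,
      0 ≤ ∑ᶠ q ∈ P, F (q.1, q.2.1) * (starRingEnd ℂ) (F (q.2.2.1, q.2.2.2))) :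
    (∀ a b c d e f : X, (a, b, c, d) ∈ P → (c, d, e, f) ∈ P → (a, b, e, f) ∈ P) ∧
    IsStrongParallelogram P := by
  classical
  have htrans : ∀ a b c d e f : X, (a, b, c, d) ∈ P → (c, d, e, f) ∈ P → (a, b, e, f) ∈ P := by
    intro a b c d e f h1 h2
    by_cases hpq : a = c ∧ b = d
    · obtain ⟨rfl, rfl⟩ := hpq; exact h2
    by_cases hqr : c = e ∧ d = f
    · obtain ⟨rfl, rfl⟩ := hqr; exact h1
    by_cases hpr : a = e ∧ b = f
    · obtain ⟨rfl, rfl⟩ := hpr; exact hrefl a b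
    by_contra hne
    have hne' : (e, f, a, b) ∉ P := fun h => hne (hsymm _ _ _ _ h)
    have hpq2 : ((a, b) : X × X) ≠ (c, d) := fun h => hpq (by simpa using h)
    have hqr2 : ((c, d) : X × X) ≠ (e, f) := fun h => hqr (by simpa using h)
    have hpr2 : ((a, b) : X × X) ≠ (e, f) := fun h => hpr (by simpa using h)
    set F : X × X → ℂ := fun s =>
      if s = (a, b) then 1 else if s = (c, d) then -1 else if s = (e, f) then 1 else 0 with hF
    have Fp : F (a, b) = 1 := by simp [hF]
    have Fq : F (c, d) = -1 := by simp [hF, Ne.symm hpq2]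
    have Fr : F (e, f) = 1 := by simp [hF, Ne.symm hpr2, Ne.symm hqr2]
    have Fzero : ∀ s : X × X, s ≠ (a, b) → s ≠ (c, d) → s ≠ (e, f) → F s = 0 := by
      intro s h₁ h₂ h₃; simp [hF, h₁, h₂, h₃]
    set g : (X × X) → (X × X) → ℂ := fun s t =>
      if (s.1, s.2, t.1, t.2) ∈ P then F s * (starRingEnd ℂ) (F t) else 0 with hg
    set T : Finset (X × X) := {(a, b), (c, d), (e, f)} with hT
    have hS : (∑ᶠ w ∈ P, F (w.1, w.2.1) * (starRingEnd ℂ) (F (w.2.2.1, w.2.2.2))) = -1 := by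
      rw [← Set.coe_toFinset P, finsum_mem_coe_finset]
      have h0 : ∑ w ∈ P.toFinset,
            F (w.1, w.2.1) * (starRingEnd ℂ) (F (w.2.2.1, w.2.2.2))
          = ∑ s : X × X, ∑ t : X × X, g s t := by
        rw [show P.toFinset
            = Finset.univ.filter (fun w : Quad X => w ∈ P) from by ext w; simp,
          Finset.sum_filter, ← Equiv.sum_comp (Equiv.prodAssoc X X (X × X)),
          Fintype.sum_prod_type]
        exact Finset.sum_congr rfl fun s _ => Finset.sum_congr rfl fun t _ => rfl
      rw [h0]
      have houter : ∑ s : X × X, ∑ t : X × X, g s t = ∑ s ∈ T, ∑ t ∈ T, g s t := by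
        rw [← Finset.sum_subset (Finset.subset_univ T) (fun s _ hs => ?_)]
        · refine Finset.sum_congr rfl fun s _ => ?_
          rw [← Finset.sum_subset (Finset.subset_univ T) (fun t _ ht => ?_)]
          have : F t = 0 := by
            simp only [hT, Finset.mem_insert, Finset.mem_singleton, not_or] at ht
            exact Fzero t ht.1 ht.2.1 ht.2.2
          simp [hg, this]
        · have : F s = 0 := by
            simp only [hT, Finset.mem_insert, Finset.mem_singleton, not_or] at hs
            exact Fzero s hs.1 hs.2.1 hs.2.2
          exact Finset.sum_eq_zero fun t _ => by simp [hg, this]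
      rw [houter, sum_triple' hpq2 hpr2 hqr2,
        sum_triple' hpq2 hpr2 hqr2, sum_triple' hpq2 hpr2 hqr2, sum_triple' hpq2 hpr2 hqr2]
      have h1' := hsymm _ _ _ _ h1
      have h2' := hsymm _ _ _ _ h2
      simp only [hg, hrefl, h1, h2, h1', h2', hne, hne', if_true, if_false, if_pos, if_neg,
        not_false_iff, Fp, Fq, Fr, map_one, map_neg]
      ring
    have hkey := hpos F
    rw [hS] at hkey
    rw [Complex.le_def] at hkey
    norm_num at hkey
  exact ⟨htrans, ⟨hrefl, hsymm, htrans, hswap, fun a b c => (hclose a b c).exists⟩, hclose⟩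

end HK
end

section
/- Let 𝒫 be a weak parallelogram structure on a nonempty set X, with base B = X²/∼ and ⟨x,y⟩ the ∼-class of (x,y). Then there is a unique multiplication on B satisfying ⟨a,b⟩·⟨b,c⟩ = ⟨a,c⟩ for all a,b,c ∈ X, and with this multiplication B is an abelian group, whose identity element is the common class of the pairs (a,a) for a ∈ X and in which the inverse of ⟨a,b⟩ is ⟨b,a⟩. -/
open scoped Pointwise

namespace HK

variable {X Y : Type}

section BaseAux

variable {P : Set (Quad X)} (hP : IsWeakParallelogram P)

include hP

lemma cls_eq {a b c d : X} : cls P hP a b = cls P hP c d ↔ (a, b, c, d) ∈ P :=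
  ⟨fun h => Quotient.exact h, fun h => Quotient.sound h⟩

lemma key_lemma {a b c d e f : X} (h1 : (a, b, c, d) ∈ P) (h2 : (b, e, d, f) ∈ P) :
    (a, e, c, f) ∈ P := by
  have h1' := hP.2.2.2.1 _ _ _ _ h1
  have h2' := hP.2.2.2.1 _ _ _ _ h2
  exact hP.2.2.2.1 _ _ _ _ (hP.2.2.1 _ _ _ _ _ _ h1' h2')

/-- Every class can be represented with prescribed first coordinate. -/
lemma rep_fst (c : X) (u : Base P hP) : ∃ d, u = cls P hP c d := by
  obtain ⟨⟨p, q⟩, rfl⟩ := Quotient.exists_rep u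
  obtain ⟨d, hd⟩ := hP.2.2.2.2 p q c
  exact ⟨d, Quotient.sound hd⟩

/-- Every class can be represented with prescribed second coordinate. -/
lemma rep_snd (c : X) (u : Base P hP) : ∃ d, u = cls P hP d c := by
  obtain ⟨⟨p, q⟩, rfl⟩ := Quotient.exists_rep u
  obtain ⟨d, hd⟩ := hP.2.2.2.2 q p c
  have h1 := hP.2.2.2.1 _ _ _ _ hd
  have h2 := hP.2.1 _ _ _ _ h1
  have h3 := hP.2.2.2.1 _ _ _ _ h2
  exact ⟨d, Quotient.sound h3⟩

/-- Any two classes can be represented with a common middle point. -/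
lemma rep2 (u v : Base P hP) : ∃ a b c, u = cls P hP a b ∧ v = cls P hP b c := by
  obtain ⟨⟨a, b⟩, rfl⟩ := Quotient.exists_rep u
  obtain ⟨c, hc⟩ := rep_fst hP b v
  exact ⟨a, b, c, rfl, hc⟩

/-- The multiplication on the base. -/
noncomputable def mulB (u v : Base P hP) : Base P hP :=
  cls P hP (rep2 hP u v).choose (rep2 hP u v).choose_spec.choose_spec.choose

lemma mulB_spec (a b c : X) :
    mulB hP (cls P hP a b) (cls P hP b c) = cls P hP a c := by
  obtain ⟨h1, h2⟩ :=
    (rep2 hP (cls P hP a b) (cls P hP b c)).choose_spec.choose_spec.choose_spec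
  have h1' := (cls_eq hP).1 h1
  have h2' := (cls_eq hP).1 h2
  exact (cls_eq hP).2 (hP.2.1 _ _ _ _ (key_lemma hP h1' h2'))

end BaseAux

/-- The base `B = X²/∼` of a weak parallelogram structure carries a unique
multiplication satisfying `⟨a,b⟩·⟨b,c⟩ = ⟨a,c⟩`, and with it `B` is an abelian group whose
identity is the common class of the pairs `(a,a)` and where `⟨a,b⟩⁻¹ = ⟨b,a⟩`. -/
theorem base_abelian_group (X : Type) [Nonempty X] (P : Set (Quad X))
    (hP : IsWeakParallelogram P) :
    (∃! mul : Base P hP → Base P hP → Base P hP,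
      ∀ a b c : X, mul (cls P hP a b) (cls P hP b c) = cls P hP a c) ∧
    (∀ mul : Base P hP → Base P hP → Base P hP,
      (∀ a b c : X, mul (cls P hP a b) (cls P hP b c) = cls P hP a c) →
      (∀ u v w : Base P hP, mul (mul u v) w = mul u (mul v w)) ∧
      (∀ u v : Base P hP, mul u v = mul v u) ∧
      (∀ (a : X) (u : Base P hP), mul (cls P hP a a) u = u ∧ mul u (cls P hP a a) = u) ∧
      (∀ a b a' : X, cls P hP a a = cls P hP a' a') ∧
      (∀ a b : X, mul (cls P hP a b) (cls P hP b a) = cls P hP a a ∧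
        mul (cls P hP b a) (cls P hP a b) = cls P hP a a)) := by
  constructor
  · refine ⟨mulB hP, mulB_spec hP, ?_⟩
    intro m hm
    funext u v
    obtain ⟨a, b, c, rfl, rfl⟩ := rep2 hP u v
    rw [hm, mulB_spec]
  · intro mul hmul
    have hdiag : ∀ a b : X, cls P hP a a = cls P hP b b := by
      intro a b
      exact (cls_eq hP).2 (hP.2.2.2.1 _ _ _ _ (hP.1 a b))
    refine ⟨?_, ?_, ?_, fun a b a' => hdiag a a', ?_⟩
    · intro u v w
      obtain ⟨a, b, c, rfl, rfl⟩ := rep2 hP u v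
      obtain ⟨d, rfl⟩ := rep_fst hP c w
      rw [hmul, hmul, hmul, hmul]
    · intro u v
      obtain ⟨a, b, c, rfl, rfl⟩ := rep2 hP u v
      obtain ⟨e, he⟩ := rep_fst hP c (cls P hP a b)
      rw [hmul, he, hmul]
      have h1 := (cls_eq hP).1 he
      have h2 := hP.2.2.2.1 _ _ _ _ h1
      exact ((cls_eq hP).2 (hP.2.1 _ _ _ _ h2)).symm
    · intro a u
      constructor
      · obtain ⟨e, rfl⟩ := rep_fst hP a u
        rw [hmul]
      · obtain ⟨e, rfl⟩ := rep_snd hP a u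
        rw [hmul]
    · intro a b
      refine ⟨hmul a b a, ?_⟩
      rw [hmul, hdiag b a]

end HK
end

section
/- Let 𝒫 be a weak parallelogram structure on a nonempty set X, let B be its base equipped with the abelian group multiplication satisfying ⟨a,b⟩·⟨b,c⟩ = ⟨a,c⟩, fix i ∈ X, and define π: X → B by π(x) = ⟨i,x⟩. Then π is surjective and 𝒫 = {(x00,x01,x10,x11) ∈ X⁴ : π(x00)·π(x01)⁻¹·π(x10)⁻¹·π(x11) = 1}. Moreover, if 𝒫 is strong then π is a bijection, so that X carries an abelian group structure for which 𝒫 = {(g, g·s, g·t, g·s·t) : g,s,t ∈ X}. -/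
open scoped Pointwise

namespace HK

variable {X Y : Type}

/-- With the base group multiplication on `B` and `π(x) = ⟨i,x⟩`, the map `π`
is surjective and `P` is exactly the set of quadruples with
`π(x00)·π(x01)⁻¹·π(x10)⁻¹·π(x11) = 1`. If moreover `P` is strong, then `π` is a bijection and
`X` carries an abelian group structure for which `P = {(g, gs, gt, gst)}`. -/
theorem parallelogram_structure_description (X : Type) [Nonempty X] (P : Set (Quad X))
    (hP : IsWeakParallelogram P) (i : X)
    (mul : Base P hP → Base P hP → Base P hP) (inv : Base P hP → Base P hP)
    (hmul : ∀ a b c : X, mul (cls P hP a b) (cls P hP b c) = cls P hP a c)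
    (hinv : ∀ a b : X, inv (cls P hP a b) = cls P hP b a) :
    Function.Surjective (fun x : X => cls P hP i x) ∧
    P = {q : Quad X |
      mul (mul (cls P hP i q.1) (inv (cls P hP i q.2.1)))
        (mul (inv (cls P hP i q.2.2.1)) (cls P hP i q.2.2.2)) = cls P hP i i} ∧
    (IsStrongParallelogram P →
      Function.Bijective (fun x : X => cls P hP i x) ∧
      ∃ (mulX : X → X → X) (oneX : X) (invX : X → X),
        (∀ a b c : X, mulX (mulX a b) c = mulX a (mulX b c)) ∧
        (∀ a b : X, mulX a b = mulX b a) ∧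
        (∀ a : X, mulX oneX a = a) ∧
        (∀ a : X, mulX (invX a) a = oneX) ∧
        P = {q : Quad X | ∃ g s t : X, q = (g, mulX g s, mulX g t, mulX g (mulX s t))}) := by
  have hrefl := hP.1
  have hsymm := hP.2.1
  have htrans := hP.2.2.1
  have hswap := hP.2.2.2.1
  have hcompl := hP.2.2.2.2
  have hcls : ∀ a b c d : X, (a, b, c, d) ∈ P → cls P hP a b = cls P hP c d :=
    fun a b c d h => Quotient.sound h
  have hcls' : ∀ a b c d : X, cls P hP a b = cls P hP c d → (a, b, c, d) ∈ P :=
    fun a b c d h => Quotient.exact h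
  have radd : ∀ a b c a' b' c' : X, (a, b, a', b') ∈ P → (b, c, b', c') ∈ P →
      (a, c, a', c') ∈ P := by
    intro a b c a' b' c' h1 h2
    exact hswap _ _ _ _ (htrans _ _ _ _ _ _ (hswap _ _ _ _ h1) (hswap _ _ _ _ h2))
  have hsurj : Function.Surjective (fun x : X => cls P hP i x) := by
    intro u
    induction u using Quotient.inductionOn with
    | h p =>
      obtain ⟨x, hx⟩ := hcompl p.1 p.2 i
      exact ⟨x, hcls _ _ _ _ (hsymm _ _ _ _ hx)⟩
  refine ⟨hsurj, ?_, ?_⟩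
  · ext ⟨x00, x01, x10, x11⟩
    obtain ⟨c, hc⟩ := hcompl x01 i x00
    obtain ⟨d, hd⟩ := hcompl x10 x11 c
    have e1 : mul (cls P hP i x00) (inv (cls P hP i x01)) = cls P hP i c := by
      rw [hinv, hcls _ _ _ _ hc, hmul]
    have e2 : mul (inv (cls P hP i x10)) (cls P hP i x11) = cls P hP c d := by
      rw [hinv, hmul, hcls _ _ _ _ hd]
    simp only [Set.mem_setOf_eq, e1, e2, hmul]
    constructor
    · intro h
      apply hcls
      have h1 : (i, c, x01, x00) ∈ P := hsymm _ _ _ _ (hswap _ _ _ _ hc)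
      have h2 : (c, d, x00, x01) ∈ P := hsymm _ _ _ _ (htrans _ _ _ _ _ _ h hd)
      have h3 : (i, d, x01, x01) ∈ P := radd _ _ _ _ _ _ h1 h2
      have h4 : (x01, x01, i, i) ∈ P := hswap _ _ _ _ (hrefl x01 i)
      exact htrans _ _ _ _ _ _ h3 h4
    · intro h
      have h0 : (i, d, i, i) ∈ P := hcls' _ _ _ _ h
      have h1 : (x01, x01, i, d) ∈ P :=
        htrans _ _ _ _ _ _ (hswap _ _ _ _ (hrefl x01 i)) (hsymm _ _ _ _ h0)
      have h2 : (x01, i, x01, d) ∈ P := hswap _ _ _ _ h1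
      have h3 : (x00, c, x01, d) ∈ P := htrans _ _ _ _ _ _ (hsymm _ _ _ _ hc) h2
      have h4 : (x00, x01, c, d) ∈ P := hswap _ _ _ _ h3
      exact htrans _ _ _ _ _ _ h4 (hsymm _ _ _ _ hd)
  · intro hS
    have hinj : Function.Injective (fun x : X => cls P hP i x) := by
      intro x y hxy
      exact (hS.2 i x i).unique (hrefl i x) (hcls' _ _ _ _ hxy)
    set m : X → X → X := fun a b => (hS.2 i a b).exists.choose with hmdef
    have hm : ∀ a b : X, (i, a, b, m a b) ∈ P := fun a b => (hS.2 i a b).exists.choose_spec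
    have hu : ∀ a b d : X, (i, a, b, d) ∈ P → m a b = d := by
      intro a b d h
      exact (hS.2 i a b).unique (hm a b) h
    set n : X → X := fun a => (hS.2 a i i).exists.choose with hndef
    have hn : ∀ a : X, (a, i, i, n a) ∈ P := fun a => (hS.2 a i i).exists.choose_spec
    refine ⟨⟨hinj, hsurj⟩, m, i, n, ?_, ?_, ?_, ?_, ?_⟩
    · intro a b c
      have h1 := hm a b
      have h2 := hm b c
      have h3 := hm (m a b) c
      have s1 : (b, m b c, i, c) ∈ P := hsymm _ _ _ _ (hswap _ _ _ _ h2)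
      have s2 : (i, c, m a b, m (m a b) c) ∈ P := hswap _ _ _ _ h3
      have s3 : (b, m b c, m a b, m (m a b) c) ∈ P := htrans _ _ _ _ _ _ s1 s2
      have s4 : (b, m a b, m b c, m (m a b) c) ∈ P := hswap _ _ _ _ s3
      have s5 : (i, a, m b c, m (m a b) c) ∈ P := htrans _ _ _ _ _ _ h1 s4
      exact (hu _ _ _ s5).symm
    · intro a b
      exact ((hu b a _ (hswap _ _ _ _ (hm a b)))).symm
    · intro a
      exact hu i a a (hswap _ _ _ _ (hrefl i a))
    · intro a
      exact hu (n a) a i (hsymm _ _ _ _ (hn a))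
    · ext ⟨x00, x01, x10, x11⟩
      simp only [Set.mem_setOf_eq]
      constructor
      · intro H
        obtain ⟨s, hs⟩ := hcompl x00 x01 i
        obtain ⟨t, ht⟩ := hcompl x00 x10 i
        have e1 : m x00 s = x01 := hu _ _ _ (hswap _ _ _ _ (hsymm _ _ _ _ hs))
        have e2 : m x00 t = x10 := hu _ _ _ (hswap _ _ _ _ (hsymm _ _ _ _ ht))
        have hv := hm s t
        have c1 : (t, m s t, x00, x01) ∈ P :=
          htrans _ _ _ _ _ _ (hsymm _ _ _ _ hv) (hsymm _ _ _ _ hs)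
        have c2 : (t, m s t, x10, x11) ∈ P := htrans _ _ _ _ _ _ c1 H
        have c3 : (t, x10, m s t, x11) ∈ P := hswap _ _ _ _ c2
        have c4 : (t, x10, i, x00) ∈ P :=
          hswap _ _ _ _ (hsymm _ _ _ _ (hswap _ _ _ _
            (hsymm _ _ _ _ (hswap _ _ _ _ ht))))
        have c5 : (m s t, x11, i, x00) ∈ P := htrans _ _ _ _ _ _ (hsymm _ _ _ _ c3) c4
        have e3 : m x00 (m s t) = x11 := hu _ _ _ (hsymm _ _ _ _ c5)
        exact ⟨x00, s, t, by rw [e1, e2, e3]⟩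
      · rintro ⟨g, s, t, heq⟩
        rw [heq]
        have hu1 := hm g s
        have hz := hm g t
        have hv := hm s t
        have hw := hm g (m s t)
        have A : (g, m g s, i, s) ∈ P := hsymm _ _ _ _ (hswap _ _ _ _ hu1)
        have B : (m g t, g, t, i) ∈ P :=
          hswap _ _ _ _ (hsymm _ _ _ _ (hswap _ _ _ _ (hsymm _ _ _ _ (hswap _ _ _ _ hz))))
        have C : (g, m g (m s t), i, m s t) ∈ P := hsymm _ _ _ _ (hswap _ _ _ _ hw)
        have D : (m g t, m g (m s t), t, m s t) ∈ P := radd _ _ _ _ _ _ B C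
        have E : (m g t, m g (m s t), i, s) ∈ P := htrans _ _ _ _ _ _ D (hsymm _ _ _ _ hv)
        exact htrans _ _ _ _ _ _ A (hsymm _ _ _ _ E)

end HK
end

section
/- Let 𝒫 be a weak parallelogram structure on a nonempty set X, with base B, basepoint i ∈ X and π: X → B defined by π(x) = ⟨i,x⟩. For x,y ∈ X the following are equivalent: (1) (x,x,x,y) ∈ 𝒫; (2) π(x) = π(y); (3) ⟨x,y⟩ = 1_B; (4) for all a,b,c ∈ X with (a,b,c,x) ∈ 𝒫 one has (a,b,c,y) ∈ 𝒫; (5) there exist a,b,c ∈ X with (a,b,c,x) ∈ 𝒫 and (a,b,c,y) ∈ 𝒫. -/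
open scoped Pointwise

namespace HK

variable {X Y : Type}

/-- For a weak parallelogram structure with basepoint `i` and
`π(x) = ⟨i,x⟩`, the five characterizations of "`x` and `y` lie in the same fiber"
are equivalent (`1_B` being the class `⟨i,i⟩`). -/
theorem same_fiber_tfae (X : Type) [Nonempty X] (P : Set (Quad X))
    (hP : IsWeakParallelogram P) (i x y : X) :
    List.TFAE [
      (x, x, x, y) ∈ P,
      cls P hP i x = cls P hP i y,
      cls P hP x y = cls P hP i i,
      ∀ a b c : X, (a, b, c, x) ∈ P → (a, b, c, y) ∈ P,

      ∃ a b c : X, (a, b, c, x) ∈ P ∧ (a, b, c, y) ∈ P] := by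
  obtain ⟨refl, symm, trans, swap, -⟩ := hP
  tfae_have 1 → 2 := by
    intro h
    apply Quotient.sound
    exact swap _ _ _ _ (trans _ _ _ _ _ _ (swap _ _ _ _ (refl i x)) h)
  tfae_have 2 → 3 := by
    intro h
    have h' : (i, x, i, y) ∈ P := Quotient.exact h
    exact Quotient.sound (symm _ _ _ _ (swap _ _ _ _ h'))
  tfae_have 3 → 4 := by
    intro h a b c hab
    have h' : (x, y, i, i) ∈ P := Quotient.exact h
    have h1 : (c, c, x, y) ∈ P :=
      trans _ _ _ _ _ _ (swap _ _ _ _ (refl c i)) (symm _ _ _ _ h')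
    exact trans _ _ _ _ _ _ hab (swap _ _ _ _ h1)
  tfae_have 4 → 5 := by
    intro h
    exact ⟨x, x, x, refl x x, h x x x (refl x x)⟩
  tfae_have 5 → 1 := by
    rintro ⟨a, b, c, h1, h2⟩
    have h3 : (c, x, c, y) ∈ P := trans _ _ _ _ _ _ (symm _ _ _ _ h1) h2
    exact trans _ _ _ _ _ _ (swap _ _ _ _ (refl x c)) (swap _ _ _ _ h3)
  tfae_finish

end HK
end

section
/- For any group G, the edge group G^{[2,1]} equals {(g00,g01,g10,g11) ∈ G⁴ : g00·g01⁻¹·g10⁻¹·g11 ∈ G₂} and also equals {(g, g·h, g·k, g·h·k·u) : g,h,k ∈ G, u ∈ G₂}. In particular, if G is abelian then G^{[2,1]} = {(g00,g01,g10,g11) ∈ G⁴ : g00·g01⁻¹·g10⁻¹·g11 = 1} = {(g, g·s, g·t, g·s·t) : g,s,t ∈ G}. -/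
open scoped Pointwise

namespace HK

variable {X Y : Type}

section Aux

variable {G : Type} [Group G]

/-- The character `q ↦ g00 g01⁻¹ g10⁻¹ g11` into the abelianization. -/
noncomputable def chi (G : Type) [Group G] : Quad G →* Abelianization G where
  toFun q := Abelianization.of (q.1 * q.2.1⁻¹ * q.2.2.1⁻¹ * q.2.2.2)
  map_one' := by simp
  map_mul' p q := by
    simp only [Prod.fst_mul, Prod.snd_mul, map_mul, map_inv, mul_inv]
    simp [mul_assoc, mul_comm, mul_left_comm]

lemma mem_comm_iff (x : G) : x ∈ commutator G ↔ Abelianization.of x = 1 :=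
  (QuotientGroup.eq_one_iff x).symm

lemma edge_le_ker : edgeGroup2 G ≤ (chi G).ker := by
  rw [edgeGroup2, Subgroup.closure_le]
  rintro q ⟨g, h | h | h⟩ <;> subst h <;>
    simp [chi, MonoidHom.mem_ker, SetLike.mem_coe]

open scoped commutatorElement in
lemma last_mem_edge {u : G} (hu : u ∈ commutator G) :
    ((1, 1, 1, u) : Quad G) ∈ edgeGroup2 G := by
  rw [commutator_eq_closure] at hu
  induction hu using Subgroup.closure_induction with
  | mem x hx =>
    obtain ⟨a, b, rfl⟩ := hx
    have ha : ((1, a, 1, a) : Quad G) ∈ edgeGroup2 G := by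
      have h1 : ((a, a, a, a) : Quad G) ∈ edgeGroup2 G :=
        Subgroup.subset_closure ⟨a, Or.inr (Or.inr rfl)⟩
      have h2 : ((a, 1, a, 1) : Quad G) ∈ edgeGroup2 G :=
        Subgroup.subset_closure ⟨a, Or.inr (Or.inl rfl)⟩
      have := mul_mem h1 (inv_mem h2)
      simpa [Prod.mul_def] using this
    have hb : ((1, 1, b, b) : Quad G) ∈ edgeGroup2 G := by
      have h1 : ((b, b, b, b) : Quad G) ∈ edgeGroup2 G :=
        Subgroup.subset_closure ⟨b, Or.inr (Or.inr rfl)⟩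
      have h2 : ((b, b, 1, 1) : Quad G) ∈ edgeGroup2 G :=
        Subgroup.subset_closure ⟨b, Or.inl rfl⟩
      have := mul_mem h1 (inv_mem h2)
      simpa [Prod.mul_def] using this
    have key : ((1, 1, 1, ⁅a, b⁆) : Quad G) =
        (1, a, 1, a) * (1, 1, b, b) * (1, a, 1, a)⁻¹ * (1, 1, b, b)⁻¹ := by
      simp [Prod.mul_def, Prod.ext_iff, commutatorElement_def]
    rw [key]
    exact mul_mem (mul_mem (mul_mem ha hb) (inv_mem ha)) (inv_mem hb)
  | one => exact one_mem (edgeGroup2 G)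
  | mul x y _ _ hx hy => simpa [Prod.mul_def] using mul_mem hx hy
  | inv x _ hx => simpa using inv_mem hx

lemma T_sub_edge {g h k u : G} (hu : u ∈ commutator G) :
    ((g, g * h, g * k, g * h * k * u) : Quad G) ∈ edgeGroup2 G := by
  have hg : ((g, g, g, g) : Quad G) ∈ edgeGroup2 G :=
    Subgroup.subset_closure ⟨g, Or.inr (Or.inr rfl)⟩
  have hh : ((1, h, 1, h) : Quad G) ∈ edgeGroup2 G := by
    have h1 : ((h, h, h, h) : Quad G) ∈ edgeGroup2 G :=
      Subgroup.subset_closure ⟨h, Or.inr (Or.inr rfl)⟩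
    have h2 : ((h, 1, h, 1) : Quad G) ∈ edgeGroup2 G :=
      Subgroup.subset_closure ⟨h, Or.inr (Or.inl rfl)⟩
    simpa [Prod.mul_def] using mul_mem h1 (inv_mem h2)
  have hk : ((1, 1, k, k) : Quad G) ∈ edgeGroup2 G := by
    have h1 : ((k, k, k, k) : Quad G) ∈ edgeGroup2 G :=
      Subgroup.subset_closure ⟨k, Or.inr (Or.inr rfl)⟩
    have h2 : ((k, k, 1, 1) : Quad G) ∈ edgeGroup2 G :=
      Subgroup.subset_closure ⟨k, Or.inl rfl⟩
    simpa [Prod.mul_def] using mul_mem h1 (inv_mem h2)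
  have hul := last_mem_edge hu
  have := mul_mem (mul_mem (mul_mem hg hh) hk) hul
  simpa [Prod.mul_def, mul_assoc] using this

end Aux

/-- The edge group `G^{[2,1]}` equals the set of quadruples with
`g00·g01⁻¹·g10⁻¹·g11 ∈ G₂`, and also equals `{(g, gh, gk, ghku) : g,h,k ∈ G, u ∈ G₂}`.
If `G` is abelian, it is the set of quadruples with `g00·g01⁻¹·g10⁻¹·g11 = 1`, which is
`{(g, gs, gt, gst)}`. -/
theorem edgeGroup2_description (G : Type) [Group G] :
    ((edgeGroup2 G : Set (Quad G)) =
      {q : Quad G | q.1 * q.2.1⁻¹ * q.2.2.1⁻¹ * q.2.2.2 ∈ commutator G}) ∧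
    ((edgeGroup2 G : Set (Quad G)) =
      {q : Quad G | ∃ g h k u : G, u ∈ commutator G ∧ q = (g, g * h, g * k, g * h * k * u)}) ∧
    ((∀ a b : G, a * b = b * a) →
      ((edgeGroup2 G : Set (Quad G)) =
        {q : Quad G | q.1 * q.2.1⁻¹ * q.2.2.1⁻¹ * q.2.2.2 = 1}) ∧
      ((edgeGroup2 G : Set (Quad G)) =
        {q : Quad G | ∃ g s t : G, q = (g, g * s, g * t, g * s * t)})) := by
  have hST : {q : Quad G | q.1 * q.2.1⁻¹ * q.2.2.1⁻¹ * q.2.2.2 ∈ commutator G} ⊆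
      {q : Quad G | ∃ g h k u : G, u ∈ commutator G ∧
        q = (g, g * h, g * k, g * h * k * u)} := by
    rintro ⟨a, b, c, d⟩ hq
    refine ⟨a, a⁻¹ * b, a⁻¹ * c, (a * (a⁻¹ * b) * (a⁻¹ * c))⁻¹ * d, ?_, ?_⟩
    · rw [mem_comm_iff]
      have : Abelianization.of ((a * (a⁻¹ * b) * (a⁻¹ * c))⁻¹ * d) =
          Abelianization.of (a * b⁻¹ * c⁻¹ * d) := by
        simp [map_mul, map_inv, mul_assoc, mul_comm, mul_left_comm]
      rw [this, ← mem_comm_iff]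
      exact hq
    · simp [Prod.ext_iff, mul_assoc]
  have hTE : {q : Quad G | ∃ g h k u : G, u ∈ commutator G ∧
      q = (g, g * h, g * k, g * h * k * u)} ⊆ (edgeGroup2 G : Set (Quad G)) := by
    rintro q ⟨g, h, k, u, hu, rfl⟩
    exact T_sub_edge hu
  have hES : (edgeGroup2 G : Set (Quad G)) ⊆
      {q : Quad G | q.1 * q.2.1⁻¹ * q.2.2.1⁻¹ * q.2.2.2 ∈ commutator G} := by
    intro q hq
    have := edge_le_ker hq
    rw [MonoidHom.mem_ker] at this
    exact (mem_comm_iff _).2 this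
  have h1 : (edgeGroup2 G : Set (Quad G)) =
      {q : Quad G | q.1 * q.2.1⁻¹ * q.2.2.1⁻¹ * q.2.2.2 ∈ commutator G} :=
    Set.Subset.antisymm hES (fun q hq => hTE (hST hq))
  have h2 : (edgeGroup2 G : Set (Quad G)) =
      {q : Quad G | ∃ g h k u : G, u ∈ commutator G ∧
        q = (g, g * h, g * k, g * h * k * u)} :=
    Set.Subset.antisymm (h1 ▸ hST) hTE
  refine ⟨h1, h2, fun hcomm => ?_⟩
  have hbot : commutator G = ⊥ := by
    apply le_antisymm _ bot_le
    rw [commutator, Subgroup.commutator_le]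
    intro g₁ _ g₂ _
    rw [Subgroup.mem_bot, commutatorElement_eq_one_iff_mul_comm]
    exact hcomm g₁ g₂
  constructor
  · rw [h1]
    ext q
    simp [hbot, Subgroup.mem_bot]
  · rw [h2]
    ext q
    constructor
    · rintro ⟨g, h, k, u, hu, rfl⟩
      rw [hbot, Subgroup.mem_bot] at hu
      exact ⟨g, h, k, by simp [hu, mul_assoc]⟩
    · rintro ⟨g, s, t, rfl⟩
      exact ⟨g, s, t, 1, one_mem _, by simp [mul_assoc]⟩

end HK
end

section
/- Let X be a nonempty set with a weak parallelogram structure 𝒫, and let 𝒬 ⊆ X^{[3]} satisfy properties (1), (2) and (3) of the definition of a weak parallelepiped structure (every face of every element of 𝒬 lies in 𝒫; invariance under Euclidean permutations; the relation ≈ is an equivalence relation), but not necessarily the closing property. For x,x' ∈ X the following are equivalent: (1) (x,x,x,x') ∈ 𝒫 and [x,x,x,x'] = 1_P; (2) for all a,b,c ∈ X with (a,b,c,x) ∈ 𝒫, one has (a,b,c,x') ∈ 𝒫 and [a,b,c,x] = [a,b,c,x']; (3) there exist a,b,c ∈ X with (a,b,c,x) ∈ 𝒫, (a,b,c,x') ∈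 𝒫, and [a,b,c,x] = [a,b,c,x']. -/
open scoped Pointwise

namespace HK

variable {X Y : Type}

section Aux
variable {X : Type} {Q : Set (Cube X)}

private lemma swap01_mem
    (hsym : ∀ (σ : Equiv.Perm (Fin 3)) (c : Vtx), ∀ x ∈ Q, (fun v => x (cubeSym σ c v)) ∈ Q)
    {p1 p2 p3 p4 q1 q2 q3 q4 : X}
    (h : joinQuad (p1,p2,p3,p4) (q1,q2,q3,q4) ∈ Q) :
    joinQuad (p1,p2,q1,q2) (p3,p4,q3,q4) ∈ Q := by
  have h2 := hsym (Equiv.swap 0 1) (fun _ => false) _ h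
  have he : (fun v => joinQuad (p1,p2,p3,p4) (q1,q2,q3,q4) (cubeSym (Equiv.swap 0 1) (fun _ => false) v))
      = joinQuad (p1,p2,q1,q2) (p3,p4,q3,q4) := by
    funext v
    have e0 : cubeSym (Equiv.swap 0 1) (fun _ => false) v 0 = v 1 := by
      simp [cubeSym]
    have e1 : cubeSym (Equiv.swap 0 1) (fun _ => false) v 1 = v 0 := by
      simp [cubeSym]
    have e2 : cubeSym (Equiv.swap 0 1) (fun _ => false) v 2 = v 2 := by
      simp [cubeSym, Equiv.swap_apply_of_ne_of_ne (by decide : (2:Fin 3) ≠ 0) (by decide : (2:Fin 3) ≠ 1)]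
    cases hv0 : v 0 <;> cases hv1 : v 1 <;> cases hv2 : v 2 <;>
      simp [joinQuad, quadAt, e0, e1, e2, hv0, hv1, hv2]
  rw [he] at h2
  exact h2

private lemma swap02_mem
    (hsym : ∀ (σ : Equiv.Perm (Fin 3)) (c : Vtx), ∀ x ∈ Q, (fun v => x (cubeSym σ c v)) ∈ Q)
    {p1 p2 p3 p4 q1 q2 q3 q4 : X}
    (h : joinQuad (p1,p2,p3,p4) (q1,q2,q3,q4) ∈ Q) :
    joinQuad (p1,q1,p3,q3) (p2,q2,p4,q4) ∈ Q := by
  have h2 := hsym (Equiv.swap 0 2) (fun _ => false) _ h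
  have he : (fun v => joinQuad (p1,p2,p3,p4) (q1,q2,q3,q4) (cubeSym (Equiv.swap 0 2) (fun _ => false) v))
      = joinQuad (p1,q1,p3,q3) (p2,q2,p4,q4) := by
    funext v
    have e0 : cubeSym (Equiv.swap 0 2) (fun _ => false) v 0 = v 2 := by
      simp [cubeSym]
    have e2 : cubeSym (Equiv.swap 0 2) (fun _ => false) v 2 = v 0 := by
      simp [cubeSym]
    have e1 : cubeSym (Equiv.swap 0 2) (fun _ => false) v 1 = v 1 := by
      simp [cubeSym, Equiv.swap_apply_of_ne_of_ne (by decide : (1:Fin 3) ≠ 0) (by decide : (1:Fin 3) ≠ 2)]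
    cases hv0 : v 0 <;> cases hv1 : v 1 <;> cases hv2 : v 2 <;>
      simp [joinQuad, quadAt, e0, e1, e2, hv0, hv1, hv2]
  rw [he] at h2
  exact h2

end Aux

/-- For `Q` satisfying the first three axioms of a weak parallelepiped
structure over a weak parallelogram structure `P` (but not necessarily the closing
property), the three characterizations of `x ≡_Q x'` are equivalent.  Here `[p] = 1_P`
is expressed as `p ≈ (a,a,a,a)` for every `a`, and `[p] = [p']` as `p ≈ p'`. -/
theorem trivial_class_tfae (X : Type) [Nonempty X] (P : Set (Quad X)) (Q : Set (Cube X))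
    (hP : IsWeakParallelogram P)
    (hfaces : ∀ x ∈ Q, ∀ (i : Fin 3) (b : Bool), face x i b ∈ P)
    (hsym : ∀ (σ : Equiv.Perm (Fin 3)) (c : Vtx), ∀ x ∈ Q, (fun v => x (cubeSym σ c v)) ∈ Q)
    (hrefl : ∀ p ∈ P, joinQuad p p ∈ Q)
    (hQsymm : ∀ p q : Quad X, joinQuad p q ∈ Q → joinQuad q p ∈ Q)
    (hQtrans : ∀ p q r : Quad X, joinQuad p q ∈ Q → joinQuad q r ∈ Q → joinQuad p r ∈ Q)
    (x x' : X) :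
    List.TFAE [
      (x, x, x, x') ∈ P ∧ ∀ a : X, joinQuad (x, x, x, x') (a, a, a, a) ∈ Q,
      ∀ a b c : X, (a, b, c, x) ∈ P →
        (a, b, c, x') ∈ P ∧ joinQuad (a, b, c, x) (a, b, c, x') ∈ Q,
      ∃ a b c : X, (a, b, c, x) ∈ P ∧ (a, b, c, x') ∈ P ∧
        joinQuad (a, b, c, x) (a, b, c, x') ∈ Q] := by
  obtain ⟨hreflP, hsymmP, htransP, hswapP, -⟩ := hP
  have hUU : ∀ u v : X, (u, u, v, v) ∈ P := fun u v => hswapP _ _ _ _ (hreflP u v)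
  tfae_have 1 → 2 := by
    rintro ⟨hxP, hxa⟩ a b c habcx
    constructor
    · have h1 : (a, c, b, x) ∈ P := hswapP _ _ _ _ habcx
      have h2 : (b, b, x, x') ∈ P := htransP _ _ _ _ _ _ (hUU b x) hxP
      exact hswapP _ _ _ _ (htransP _ _ _ _ _ _ h1 (hswapP _ _ _ _ h2))
    · have A1 : joinQuad (a, b, a, b) (c, x, c, x) ∈ Q :=
        swap01_mem hsym (hrefl _ habcx)
      have B : joinQuad (c, c, c, c) (x, x, x, x') ∈ Q := hQsymm _ _ (hxa c)
      have A2 : joinQuad (c, x, c, x) (c, x, c, x') ∈ Q := swap02_mem hsym B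
      exact swap01_mem hsym (hQtrans _ _ _ A1 A2)
  tfae_have 2 → 3 := by
    intro h2
    have hxx : (x, x, x, x) ∈ P := hreflP x x
    exact ⟨x, x, x, hxx, (h2 x x x hxx).1, (h2 x x x hxx).2⟩
  tfae_have 3 → 1 := by
    rintro ⟨a, b, c, hx, hx', hQ⟩
    have hP1 : (b, x, b, x') ∈ P :=
      htransP _ _ _ _ _ _ (hsymmP _ _ _ _ (hswapP _ _ _ _ hx)) (hswapP _ _ _ _ hx')
    have hxxP : (x, x, x, x') ∈ P :=
      htransP _ _ _ _ _ _ (hsymmP _ _ _ _ (hUU b x)) (hswapP _ _ _ _ hP1)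
    refine ⟨hxxP, fun e => ?_⟩
    have C1 : joinQuad (a, a, c, c) (b, b, x, x') ∈ Q := swap02_mem hsym hQ
    have C2 : joinQuad (a, a, c, c) (b, b, x, x) ∈ Q := swap02_mem hsym (hrefl _ hx)
    have C3 : joinQuad (b, b, x, x) (b, b, x, x') ∈ Q := hQtrans _ _ _ (hQsymm _ _ C2) C1
    have C4 : joinQuad (b, b, b, b) (x, x, x, x') ∈ Q := swap01_mem hsym C3
    have C5 : joinQuad (b, b, b, b) (e, e, e, e) ∈ Q :=
      swap01_mem hsym (hrefl _ (hUU b e))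
    exact hQtrans _ _ _ (hQsymm _ _ C4) C5
  tfae_finish

end HK
end
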